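/- Let n ≥ 2 and let B = ℂ[x₀,x₁,x₂,x₃] be graded with deg(x₀)=1, deg(x₁)=2, deg(x₂)=2n−1, deg(x₃)=4n−3. If f ∈ B is homogeneous of degree 4n−2 and the coefficients of the monomials x₀x₃, x₂², and x₁^{2n−1} in f are all nonzero, then there is a graded ℂ-algebra automorphism of B sending f to a scalar multiple of x₀x₃ + x₁^{2n−1} + x₂². -/

import Mathlib

open MvPolynomial

noncomputable section

/-- The weights of the variables `x₀, x₁, x₂, x₃`. -/
def wgt (n : ℕ) : Fin 4 → ℤ := ![1, 2, 2*(n:ℤ)-1, 4*(n:ℤ)-3]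

lemma weight_eq (n : ℕ) (d : Fin 4 →₀ ℕ) :
    Finsupp.weight (wgt n) d
      = (d 0 : ℤ) + 2*(d 1 : ℤ) + (2*(n:ℤ)-1)*(d 2 : ℤ) + (4*(n:ℤ)-3)*(d 3 : ℤ) := by
  rw [Finsupp.weight_apply, Finsupp.sum_fintype]
  · simp [wgt, Fin.sum_univ_four, nsmul_eq_mul]; ring
  · intro i; exact zero_smul _ _

lemma fin4_ext (d e : Fin 4 →₀ ℕ) (h0 : d 0 = e 0) (h1 : d 1 = e 1) (h2 : d 2 = e 2)
    (h3 : d 3 = e 3) : d = e := by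
  ext i
  fin_cases i
  · exact h0
  · exact h1
  · exact h2
  · exact h3

lemma classify (n : ℕ) (hn : 2 ≤ n) (d : Fin 4 →₀ ℕ)
    (hd : Finsupp.weight (wgt n) d = 4*(n:ℤ)-2) :
    d = (Finsupp.single 0 1 + Finsupp.single 3 1) ∨ d = Finsupp.single 2 2 ∨
      d = Finsupp.single 1 (2*n-1) ∨ (1 ≤ d 0 ∧ d 3 = 0 ∧ d 2 ≤ 1) := by
  rw [weight_eq] at hd
  have hn' : (2:ℤ) ≤ (n:ℤ) := by exact_mod_cast hn
  have ha0 : (0:ℤ) ≤ (d 0 : ℤ) := Nat.cast_nonneg' _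
  have hb0 : (0:ℤ) ≤ (d 1 : ℤ) := Nat.cast_nonneg' _
  have hc0 : (0:ℤ) ≤ (d 2 : ℤ) := Nat.cast_nonneg' _
  have he0 : (0:ℤ) ≤ (d 3 : ℤ) := Nat.cast_nonneg' _
  have he1 : d 3 = 0 ∨ d 3 = 1 := by
    by_contra h
    push_neg at h
    have : (2:ℤ) ≤ (d 3 : ℤ) := by exact_mod_cast (by omega : 2 ≤ d 3)
    nlinarith
  rcases he1 with he | he
  · rw [he] at hd
    push_cast at hd
    have hc2 : d 2 = 0 ∨ d 2 = 1 ∨ d 2 = 2 := by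
      by_contra h
      push_neg at h
      have : (3:ℤ) ≤ (d 2 : ℤ) := by exact_mod_cast (by omega : 3 ≤ d 2)
      nlinarith
    rcases hc2 with hc | hc | hc <;> rw [hc] at hd <;> push_cast at hd
    · by_cases h0 : d 0 = 0
      · right; right; left
        rw [h0] at hd; push_cast at hd
        have hb : d 1 = 2*n-1 := by omega
        refine fin4_ext _ _ ?_ ?_ ?_ ?_ <;> simp [Finsupp.single_apply, h0, hb, hc, he]
      · right; right; right
        exact ⟨by omega, he, by omega⟩
    · right; right; right
      exact ⟨by omega, he, by omega⟩
    · right; left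
      have h0 : d 0 = 0 := by omega
      have hb : d 1 = 0 := by omega
      refine fin4_ext _ _ ?_ ?_ ?_ ?_ <;> simp [Finsupp.single_apply, h0, hb, hc, he]
  · rw [he] at hd
    push_cast at hd
    have hcc : d 2 = 0 := by
      by_contra h
      have : (1:ℤ) ≤ (d 2 : ℤ) := by exact_mod_cast Nat.one_le_iff_ne_zero.mpr h
      nlinarith
    rw [hcc] at hd; push_cast at hd
    have h0 : d 0 = 1 := by omega
    have hb : d 1 = 0 := by omega
    left
    refine fin4_ext _ _ ?_ ?_ ?_ ?_ <;> simp [Finsupp.single_apply, h0, hb, hcc, he]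

lemma aux_cast {σ : Type*} {w : σ → ℤ} {p : MvPolynomial σ ℂ} {m m' : ℤ}
    (hp : IsWeightedHomogeneous w p m) (h : m = m') : IsWeightedHomogeneous w p m' := h ▸ hp

lemma aux_pow {σ : Type*} {w : σ → ℤ} {p : MvPolynomial σ ℂ} {m : ℤ}
    (hp : IsWeightedHomogeneous w p m) (k : ℕ) :
    IsWeightedHomogeneous w (p ^ k) ((k : ℤ) * m) := by
  induction k with
  | zero => simpa using isWeightedHomogeneous_one ℂ w
  | succ k ih =>
      rw [pow_succ]
      exact aux_cast (ih.mul hp) (by push_cast; ring)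

lemma aux_sub {σ : Type*} {w : σ → ℤ} {p q : MvPolynomial σ ℂ} {m : ℤ}
    (hp : IsWeightedHomogeneous w p m) (hq : IsWeightedHomogeneous w q m) :
    IsWeightedHomogeneous w (p - q) m :=
  (weightedHomogeneousSubmodule ℂ w m).sub_mem hp hq

lemma aux_aeval_homog {σ : Type*} {w : σ → ℤ} (g : σ → MvPolynomial σ ℂ)
    (hg : ∀ i, (g i).IsWeightedHomogeneous w (w i)) {k : ℤ} {p : MvPolynomial σ ℂ}
    (hp : p.IsWeightedHomogeneous w k) :
    (aeval g p).IsWeightedHomogeneous w k := by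
  rw [p.as_sum, map_sum]
  apply IsWeightedHomogeneous.sum
  intro d hd
  rw [aeval_monomial]
  have h1 : IsWeightedHomogeneous w ((algebraMap ℂ (MvPolynomial σ ℂ)) (coeff d p)) 0 :=
    isWeightedHomogeneous_C w _
  have h2 : IsWeightedHomogeneous w (d.prod fun i k => g i ^ k)
      (Finsupp.weight w d) := by
    rw [Finsupp.prod, Finsupp.weight_apply, Finsupp.sum]
    exact IsWeightedHomogeneous.prod _ _ _ fun i _ => by
      have := aux_pow (hg i) (d i)
      simpa [smul_eq_mul] using this
  have := h1.mul h2
  rw [zero_add] at this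
  rwa [hp (mem_support_iff.mp hd)] at this

lemma aux_fix_monomial {σ : Type*} [DecidableEq σ] (g : σ → MvPolynomial σ ℂ) (m : σ →₀ ℕ) (c : ℂ)
    (h : ∀ i, m i ≠ 0 → g i = X i) : aeval g (monomial m c) = monomial m c := by
  rw [aeval_monomial, monomial_eq]
  congr 1
  apply Finsupp.prod_congr
  intro i hi
  rw [h i (Finsupp.mem_support_iff.mp hi)]

def mkEquiv (g h : Fin 4 → MvPolynomial (Fin 4) ℂ)
    (hgh : ∀ i, aeval g (h i) = X i) (hhg : ∀ i, aeval h (g i) = X i) :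
    MvPolynomial (Fin 4) ℂ ≃ₐ[ℂ] MvPolynomial (Fin 4) ℂ :=
  AlgEquiv.ofAlgHom (aeval g) (aeval h)
    (algHom_ext fun i => by rw [AlgHom.comp_apply, aeval_X]; exact hgh i)
    (algHom_ext fun i => by rw [AlgHom.comp_apply, aeval_X]; exact hhg i)

lemma mkEquiv_apply (g h : Fin 4 → MvPolynomial (Fin 4) ℂ) (hgh hhg)
    (p : MvPolynomial (Fin 4) ℂ) : mkEquiv g h hgh hhg p = aeval g p := rfl

/-- If `f ∈ B = ℂ[x₀,x₁,x₂,x₃]` (weights `1, 2, 2n−1, 4n−3`) is weighted homogeneous of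
degree `4n−2` and the coefficients of `x₀x₃`, `x₂²` and `x₁^(2n−1)` in `f` are nonzero, then
some graded `ℂ`-algebra automorphism of `B` sends `f` to a nonzero scalar multiple of
`x₀x₃ + x₁^(2n−1) + x₂²`. -/
theorem stmt_0 (n : ℕ) (hn : 2 ≤ n) (f : MvPolynomial (Fin 4) ℂ)
    (hf : f.IsWeightedHomogeneous (wgt n) (4*(n:ℤ)-2))
    (h03 : MvPolynomial.coeff (Finsupp.single 0 1 + Finsupp.single 3 1) f ≠ 0)
    (h2 : MvPolynomial.coeff (Finsupp.single 2 2) f ≠ 0)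
    (h1 : MvPolynomial.coeff (Finsupp.single 1 (2*n-1)) f ≠ 0) :
    ∃ (φ : MvPolynomial (Fin 4) ℂ ≃ₐ[ℂ] MvPolynomial (Fin 4) ℂ) (c : ℂ), c ≠ 0 ∧
      (∀ (k : ℤ) (p : MvPolynomial (Fin 4) ℂ),
        p.IsWeightedHomogeneous (wgt n) k → (φ p).IsWeightedHomogeneous (wgt n) k) ∧
      φ f = c • (X 0 * X 3 + X 1 ^ (2*n-1) + X 2 ^ 2) := by
  classical
  set w := wgt n with hw
  set α := MvPolynomial.coeff (Finsupp.single 0 1 + Finsupp.single 3 1) f with hα_def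
  set β := MvPolynomial.coeff (Finsupp.single 2 2 : Fin 4 →₀ ℕ) f with hβ_def
  set γ := MvPolynomial.coeff (Finsupp.single 1 (2*n-1) : Fin 4 →₀ ℕ) f with hγ_def
  -- basic monomial identities
  have hX03 : (X 0 * X 3 : MvPolynomial (Fin 4) ℂ)
      = monomial (Finsupp.single 0 1 + Finsupp.single 3 1) 1 := by
    rw [X, X, monomial_mul, one_mul]
  have hX22 : (X 2 ^ 2 : MvPolynomial (Fin 4) ℂ) = monomial (Finsupp.single 2 2) 1 :=
    X_pow_eq_monomial
  have hX1k : (X 1 ^ (2*n-1) : MvPolynomial (Fin 4) ℂ)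
      = monomial (Finsupp.single 1 (2*n-1)) 1 := X_pow_eq_monomial
  -- distinctness of special exponents
  have hne1 : (Finsupp.single 0 1 + Finsupp.single 3 1 : Fin 4 →₀ ℕ) ≠ Finsupp.single 2 2 := by
    intro h
    have := DFunLike.congr_fun h 3
    simp [Finsupp.single_apply] at this
  have hne2 : (Finsupp.single 0 1 + Finsupp.single 3 1 : Fin 4 →₀ ℕ)
      ≠ Finsupp.single 1 (2*n-1) := by
    intro h
    have := DFunLike.congr_fun h 3
    simp [Finsupp.single_apply] at this
  have hne3 : (Finsupp.single 2 2 : Fin 4 →₀ ℕ) ≠ Finsupp.single 1 (2*n-1) := by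
    intro h
    have := DFunLike.congr_fun h 2
    simp [Finsupp.single_apply] at this
  -- the remainder
  set r : MvPolynomial (Fin 4) ℂ :=
    f - C α * (X 0 * X 3) - C β * X 2 ^ 2 - C γ * X 1 ^ (2*n-1) with hr_def
  -- weights of the special exponents
  have hwsingle : ∀ (i : Fin 4) (k : ℕ),
      Finsupp.weight w (Finsupp.single i k) = (k:ℤ) * w i := by
    intro i k
    rw [Finsupp.weight_apply]
    rw [Finsupp.sum_single_index (zero_smul ℕ (w i))]
    exact nsmul_eq_mul _ _
  have hw0 : w 0 = 1 := rfl
  have hw1 : w 1 = 2 := rfl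
  have hw2 : w 2 = 2*(n:ℤ)-1 := rfl
  have hw3 : w 3 = 4*(n:ℤ)-3 := rfl
  have hw03 : Finsupp.weight w (Finsupp.single 0 1 + Finsupp.single 3 1 : Fin 4 →₀ ℕ) = 4*(n:ℤ)-2 := by
    rw [map_add, hwsingle, hwsingle, hw0, hw3]; push_cast; ring
  have hw22 : Finsupp.weight w (Finsupp.single 2 2 : Fin 4 →₀ ℕ) = 4*(n:ℤ)-2 := by
    rw [hwsingle, hw2]; push_cast; ring
  have hw1k : Finsupp.weight w (Finsupp.single 1 (2*n-1) : Fin 4 →₀ ℕ) = 4*(n:ℤ)-2 := by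
    rw [hwsingle, hw1]; omega
  have hr_homog : r.IsWeightedHomogeneous w (4*(n:ℤ)-2) := by
    rw [hr_def]
    refine aux_sub (aux_sub (aux_sub hf ?_) ?_) ?_
    · rw [hX03, C_mul_monomial, mul_one]
      exact isWeightedHomogeneous_monomial _ _ _ hw03
    · rw [hX22, C_mul_monomial, mul_one]
      exact isWeightedHomogeneous_monomial _ _ _ hw22
    · rw [hX1k, C_mul_monomial, mul_one]
      exact isWeightedHomogeneous_monomial _ _ _ hw1k
  -- coefficients of r at the special exponents vanish
  have hrc1 : coeff (Finsupp.single 0 1 + Finsupp.single 3 1) r = 0 := by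
    rw [hr_def, hX03, hX22, hX1k, C_mul_monomial, C_mul_monomial, C_mul_monomial,
      mul_one, mul_one, mul_one, coeff_sub, coeff_sub, coeff_sub,
      coeff_monomial, coeff_monomial, coeff_monomial, if_pos rfl,
      if_neg hne1.symm, if_neg hne2.symm, ← hα_def]
    ring
  have hrc2 : coeff (Finsupp.single 2 2 : Fin 4 →₀ ℕ) r = 0 := by
    rw [hr_def, hX03, hX22, hX1k, C_mul_monomial, C_mul_monomial, C_mul_monomial,
      mul_one, mul_one, mul_one, coeff_sub, coeff_sub, coeff_sub,
      coeff_monomial, coeff_monomial, coeff_monomial, if_pos rfl,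
      if_neg hne1, if_neg hne3.symm, ← hβ_def]
    ring
  have hrc3 : coeff (Finsupp.single 1 (2*n-1) : Fin 4 →₀ ℕ) r = 0 := by
    rw [hr_def, hX03, hX22, hX1k, C_mul_monomial, C_mul_monomial, C_mul_monomial,
      mul_one, mul_one, mul_one, coeff_sub, coeff_sub, coeff_sub,
      coeff_monomial, coeff_monomial, coeff_monomial, if_pos rfl,
      if_neg hne2, if_neg hne3, ← hγ_def]
    ring
  -- support of r
  have hr_supp : ∀ d ∈ r.support, 1 ≤ d 0 ∧ d 3 = 0 ∧ d 2 ≤ 1 := by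
    intro d hd
    have hcd : coeff d r ≠ 0 := mem_support_iff.mp hd
    have hwd : Finsupp.weight w d = 4*(n:ℤ)-2 := hr_homog hcd
    rcases classify n hn d hwd with h | h | h | h
    · rw [h] at hcd; exact absurd hrc1 hcd
    · rw [h] at hcd; exact absurd hrc2 hcd
    · rw [h] at hcd; exact absurd hrc3 hcd
    · exact h
  -- decomposition r = X0*X2*P + X0*Q
  set P : MvPolynomial (Fin 4) ℂ :=
    ∑ d ∈ r.support.filter (fun d => d 2 = 1),
      monomial (d - Finsupp.single 0 1 - Finsupp.single 2 1) (coeff d r) with hP_def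
  set Q : MvPolynomial (Fin 4) ℂ :=
    ∑ d ∈ r.support.filter (fun d => d 2 = 0),
      monomial (d - Finsupp.single 0 1) (coeff d r) with hQ_def
  have key1 : ∀ d : Fin 4 →₀ ℕ, 1 ≤ d 0 → d 3 = 0 → d 2 = 1 →
      (Finsupp.single 0 1 + Finsupp.single 2 1)
        + (d - Finsupp.single 0 1 - Finsupp.single 2 1) = d := by
    intro d h0 h3 hc
    refine fin4_ext _ _ ?_ ?_ ?_ ?_ <;>
      simp [Finsupp.tsub_apply, Finsupp.single_apply] <;> omega
  have key1' : ∀ d : Fin 4 →₀ ℕ,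
      (d - Finsupp.single 0 1 - Finsupp.single 2 1 : Fin 4 →₀ ℕ) 2 = d 2 - 1
      ∧ (d - Finsupp.single 0 1 - Finsupp.single 2 1 : Fin 4 →₀ ℕ) 3 = d 3 := by
    intro d
    constructor <;> simp [Finsupp.tsub_apply, Finsupp.single_apply]
  have key2 : ∀ d : Fin 4 →₀ ℕ, 1 ≤ d 0 →
      Finsupp.single 0 1 + (d - Finsupp.single 0 1) = d := by
    intro d h0
    refine fin4_ext _ _ ?_ ?_ ?_ ?_ <;>
      simp [Finsupp.tsub_apply, Finsupp.single_apply] <;> omega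
  have key2' : ∀ d : Fin 4 →₀ ℕ,
      (d - Finsupp.single 0 1 : Fin 4 →₀ ℕ) 2 = d 2
      ∧ (d - Finsupp.single 0 1 : Fin 4 →₀ ℕ) 3 = d 3 := by
    intro d
    constructor <;> simp [Finsupp.tsub_apply, Finsupp.single_apply]
  have hX02 : (X 0 * X 2 : MvPolynomial (Fin 4) ℂ)
      = monomial (Finsupp.single 0 1 + Finsupp.single 2 1) 1 := by
    rw [X, X, monomial_mul, one_mul]
  have hr_eq : r = X 0 * X 2 * P + X 0 * Q := by
    have hP1 : X 0 * X 2 * P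
        = ∑ d ∈ r.support.filter (fun d => d 2 = 1), monomial d (coeff d r) := by
      rw [hP_def, Finset.mul_sum]
      refine Finset.sum_congr rfl ?_
      intro d hd
      rw [Finset.mem_filter] at hd
      obtain ⟨h0, h3, _⟩ := hr_supp d hd.1
      rw [hX02, monomial_mul, one_mul, key1 d h0 h3 hd.2]
    have hQ1 : X 0 * Q
        = ∑ d ∈ r.support.filter (fun d => d 2 = 0), monomial d (coeff d r) := by
      rw [hQ_def, Finset.mul_sum]
      refine Finset.sum_congr rfl ?_
      intro d hd
      rw [Finset.mem_filter] at hd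
      obtain ⟨h0, h3, _⟩ := hr_supp d hd.1
      rw [X, monomial_mul, one_mul, key2 d h0]
    rw [hP1, hQ1]
    have hfe : r.support.filter (fun d => d 2 = 0)
        = r.support.filter (fun d => ¬ (d 2 = 1)) := by
      apply Finset.filter_congr
      intro d hd
      obtain ⟨h0, h3, hc⟩ := hr_supp d hd
      constructor
      · intro h; omega
      · intro h; omega
    rw [hfe, Finset.sum_filter_add_sum_filter_not, support_sum_monomial_coeff]
  -- homogeneity of P and Q
  have hP_homog : P.IsWeightedHomogeneous w (2*(n:ℤ)-2) := by
    rw [hP_def]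
    apply IsWeightedHomogeneous.sum
    intro d hd
    rw [Finset.mem_filter] at hd
    obtain ⟨h0, h3, _⟩ := hr_supp d hd.1
    apply isWeightedHomogeneous_monomial
    have hwd : Finsupp.weight w d = 4*(n:ℤ)-2 := hr_homog (mem_support_iff.mp hd.1)
    have := congrArg (Finsupp.weight w) (key1 d h0 h3 hd.2)
    rw [map_add, map_add, hwsingle, hwsingle, hw0, hw2, hwd] at this
    push_cast at this
    linarith
  have hQ_homog : Q.IsWeightedHomogeneous w (4*(n:ℤ)-3) := by
    rw [hQ_def]
    apply IsWeightedHomogeneous.sum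
    intro d hd
    rw [Finset.mem_filter] at hd
    obtain ⟨h0, h3, _⟩ := hr_supp d hd.1
    apply isWeightedHomogeneous_monomial
    have hwd : Finsupp.weight w d = 4*(n:ℤ)-2 := hr_homog (mem_support_iff.mp hd.1)
    have := congrArg (Finsupp.weight w) (key2 d h0)
    rw [map_add, hwsingle, hw0, hwd] at this
    push_cast at this
    linarith
  -- substitutions fixing P and Q
  have hPfix : ∀ g : Fin 4 → MvPolynomial (Fin 4) ℂ, g 0 = X 0 → g 1 = X 1 →
      aeval g P = P := by
    intro g hg0 hg1
    rw [hP_def, map_sum]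
    refine Finset.sum_congr rfl ?_
    intro d hd
    rw [Finset.mem_filter] at hd
    obtain ⟨h0, h3, _⟩ := hr_supp d hd.1
    apply aux_fix_monomial
    intro i hi
    fin_cases i
    · exact hg0
    · exact hg1
    · exact absurd (show (d - Finsupp.single 0 1 - Finsupp.single 2 1 : Fin 4 →₀ ℕ) 2 = 0 by
        rw [(key1' d).1, hd.2]) hi
    · exact absurd (show (d - Finsupp.single 0 1 - Finsupp.single 2 1 : Fin 4 →₀ ℕ) 3 = 0 by
        rw [(key1' d).2, h3]) hi
  have hQfix : ∀ g : Fin 4 → MvPolynomial (Fin 4) ℂ, g 0 = X 0 → g 1 = X 1 →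
      aeval g Q = Q := by
    intro g hg0 hg1
    rw [hQ_def, map_sum]
    refine Finset.sum_congr rfl ?_
    intro d hd
    rw [Finset.mem_filter] at hd
    obtain ⟨h0, h3, _⟩ := hr_supp d hd.1
    apply aux_fix_monomial
    intro i hi
    fin_cases i
    · exact hg0
    · exact hg1
    · exact absurd (show (d - Finsupp.single 0 1 : Fin 4 →₀ ℕ) 2 = 0 by
        rw [(key2' d).1, hd.2]) hi
    · exact absurd (show (d - Finsupp.single 0 1 : Fin 4 →₀ ℕ) 3 = 0 by
        rw [(key2' d).2, h3]) hi
  -- the decomposition of f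
  have hfe2 : f = C α * (X 0 * X 3) + C β * X 2 ^ 2 + C γ * X 1 ^ (2*n-1)
      + (X 0 * X 2 * P + X 0 * Q) := by
    rw [← hr_eq, hr_def]; ring
  -- scalars
  set t : ℂ := (2*β)⁻¹ with ht_def
  have ht : 2 * t * β = 1 := by
    rw [ht_def]
    field_simp
  set u : ℂ := t - β*t^2 with hu_def
  obtain ⟨s, hs⟩ : ∃ s : ℂ, s ^ 2 = γ/β :=
    ⟨(γ/β) ^ ((2:ℕ)⁻¹ : ℂ), Complex.cpow_ofNat_inv_pow _ 2⟩
  have hs2 : β * s ^ 2 = γ := by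
    rw [hs]
    field_simp
  have hs0 : s ≠ 0 := by
    intro h
    rw [h] at hs2
    simp at hs2
    exact h1 hs2.symm
  -- the first substitution: x₂ ↦ x₂ - t·x₀·P
  set T : MvPolynomial (Fin 4) ℂ := C t * (X 0 * P) with hT_def
  set σ₁ : Fin 4 → MvPolynomial (Fin 4) ℂ :=
    fun i => if i = 2 then X 2 - T else X i with hσ₁_def
  set σ₁' : Fin 4 → MvPolynomial (Fin 4) ℂ :=
    fun i => if i = 2 then X 2 + T else X i with hσ₁'_def
  have hv10 : σ₁ 0 = X 0 := by rw [hσ₁_def]; exact if_neg (by decide)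
  have hv11 : σ₁ 1 = X 1 := by rw [hσ₁_def]; exact if_neg (by decide)
  have hv12 : σ₁ 2 = X 2 - T := by rw [hσ₁_def]; exact if_pos rfl
  have hv13 : σ₁ 3 = X 3 := by rw [hσ₁_def]; exact if_neg (by decide)
  have hv10' : σ₁' 0 = X 0 := by rw [hσ₁'_def]; exact if_neg (by decide)
  have hv11' : σ₁' 1 = X 1 := by rw [hσ₁'_def]; exact if_neg (by decide)
  have hv12' : σ₁' 2 = X 2 + T := by rw [hσ₁'_def]; exact if_pos rfl
  have hv13' : σ₁' 3 = X 3 := by rw [hσ₁'_def]; exact if_neg (by decide)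
  have hσ₁P : aeval σ₁ P = P := hPfix σ₁ hv10 hv11
  have hσ₁Q : aeval σ₁ Q = Q := hQfix σ₁ hv10 hv11
  have hσ₁'P : aeval σ₁' P = P := hPfix σ₁' hv10' hv11'
  have hσ₁T : aeval σ₁ T = T := by
    rw [hT_def, map_mul, map_mul, aeval_C, aeval_X, algebraMap_eq, hv10, hσ₁P]
  have hσ₁'T : aeval σ₁' T = T := by
    rw [hT_def, map_mul, map_mul, aeval_C, aeval_X, algebraMap_eq, hv10', hσ₁'P]
  have hc1a : ∀ i, aeval σ₁ (σ₁' i) = X i := by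
    intro i
    fin_cases i
    · show aeval σ₁ (σ₁' 0) = X 0
      rw [hv10', aeval_X, hv10]
    · show aeval σ₁ (σ₁' 1) = X 1
      rw [hv11', aeval_X, hv11]
    · show aeval σ₁ (σ₁' 2) = X 2
      rw [hv12', map_add, aeval_X, hv12, hσ₁T]; ring
    · show aeval σ₁ (σ₁' 3) = X 3
      rw [hv13', aeval_X, hv13]
  have hc1b : ∀ i, aeval σ₁' (σ₁ i) = X i := by
    intro i
    fin_cases i
    · show aeval σ₁' (σ₁ 0) = X 0
      rw [hv10, aeval_X, hv10']
    · show aeval σ₁' (σ₁ 1) = X 1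
      rw [hv11, aeval_X, hv11']
    · show aeval σ₁' (σ₁ 2) = X 2
      rw [hv12, map_sub, aeval_X, hv12', hσ₁'T]; ring
    · show aeval σ₁' (σ₁ 3) = X 3
      rw [hv13, aeval_X, hv13']
  -- result of the first substitution
  set Q' : MvPolynomial (Fin 4) ℂ := Q - C u * (X 0 * P ^ 2) with hQ'_def
  set f₂ : MvPolynomial (Fin 4) ℂ :=
    C α * (X 0 * X 3) + C β * X 2 ^ 2 + C γ * X 1 ^ (2*n-1) + X 0 * Q' with hf₂_def
  have hCt : (2 : MvPolynomial (Fin 4) ℂ) * C t * C β = 1 := by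
    have := congrArg (C : ℂ → MvPolynomial (Fin 4) ℂ) ht
    rw [map_mul, map_mul, map_one, map_ofNat] at this
    exact this
  have haeval1 : aeval σ₁ f = f₂ := by
    rw [hfe2]
    simp only [map_add, map_mul, map_pow, aeval_C, aeval_X, algebraMap_eq,
      hv10, hv11, hv12, hv13, hσ₁P, hσ₁Q]
    rw [hf₂_def, hQ'_def, hT_def]
    have hCu : (C u : MvPolynomial (Fin 4) ℂ) = C t - C β * C t ^ 2 := by
      rw [hu_def, map_sub, map_mul, map_pow]
    rw [hCu]
    linear_combination (-(X 0 * P * X 2)) * hCt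
  -- the second substitution: x₃ ↦ x₃ - α⁻¹·Q'
  set σ₂ : Fin 4 → MvPolynomial (Fin 4) ℂ :=
    fun i => if i = 3 then X 3 - C α⁻¹ * Q' else X i with hσ₂_def
  set σ₂' : Fin 4 → MvPolynomial (Fin 4) ℂ :=
    fun i => if i = 3 then X 3 + C α⁻¹ * Q' else X i with hσ₂'_def
  have hv20 : σ₂ 0 = X 0 := by rw [hσ₂_def]; exact if_neg (by decide)
  have hv21 : σ₂ 1 = X 1 := by rw [hσ₂_def]; exact if_neg (by decide)
  have hv22 : σ₂ 2 = X 2 := by rw [hσ₂_def]; exact if_neg (by decide)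
  have hv23 : σ₂ 3 = X 3 - C α⁻¹ * Q' := by rw [hσ₂_def]; exact if_pos rfl
  have hv20' : σ₂' 0 = X 0 := by rw [hσ₂'_def]; exact if_neg (by decide)
  have hv21' : σ₂' 1 = X 1 := by rw [hσ₂'_def]; exact if_neg (by decide)
  have hv22' : σ₂' 2 = X 2 := by rw [hσ₂'_def]; exact if_neg (by decide)
  have hv23' : σ₂' 3 = X 3 + C α⁻¹ * Q' := by rw [hσ₂'_def]; exact if_pos rfl
  have hσ₂Q' : aeval σ₂ Q' = Q' := by
    rw [hQ'_def, map_sub, map_mul, map_mul, map_pow, aeval_C, aeval_X, algebraMap_eq,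
      hv20, hPfix σ₂ hv20 hv21, hQfix σ₂ hv20 hv21]
  have hσ₂'Q' : aeval σ₂' Q' = Q' := by
    rw [hQ'_def, map_sub, map_mul, map_mul, map_pow, aeval_C, aeval_X, algebraMap_eq,
      hv20', hPfix σ₂' hv20' hv21', hQfix σ₂' hv20' hv21']
  have hc2a : ∀ i, aeval σ₂ (σ₂' i) = X i := by
    intro i
    fin_cases i
    · show aeval σ₂ (σ₂' 0) = X 0
      rw [hv20', aeval_X, hv20]
    · show aeval σ₂ (σ₂' 1) = X 1
      rw [hv21', aeval_X, hv21]
    · show aeval σ₂ (σ₂' 2) = X 2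
      rw [hv22', aeval_X, hv22]
    · show aeval σ₂ (σ₂' 3) = X 3
      rw [hv23', map_add, map_mul, aeval_C, algebraMap_eq, aeval_X, hv23, hσ₂Q']; ring
  have hc2b : ∀ i, aeval σ₂' (σ₂ i) = X i := by
    intro i
    fin_cases i
    · show aeval σ₂' (σ₂ 0) = X 0
      rw [hv20, aeval_X, hv20']
    · show aeval σ₂' (σ₂ 1) = X 1
      rw [hv21, aeval_X, hv21']
    · show aeval σ₂' (σ₂ 2) = X 2
      rw [hv22, aeval_X, hv22']
    · show aeval σ₂' (σ₂ 3) = X 3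
      rw [hv23, map_sub, map_mul, aeval_C, algebraMap_eq, aeval_X, hv23', hσ₂'Q']; ring
  set f₃ : MvPolynomial (Fin 4) ℂ :=
    C α * (X 0 * X 3) + C β * X 2 ^ 2 + C γ * X 1 ^ (2*n-1) with hf₃_def
  have hCα : (C α : MvPolynomial (Fin 4) ℂ) * C α⁻¹ = 1 := by
    rw [← map_mul, mul_inv_cancel₀ h03, map_one]
  have haeval2 : aeval σ₂ f₂ = f₃ := by
    rw [hf₂_def, hf₃_def]
    simp only [map_add, map_mul, map_pow, aeval_C, aeval_X, algebraMap_eq,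
      hv20, hv21, hv22, hv23, hσ₂Q']
    linear_combination (-(X 0 * Q')) * hCα
  -- the third substitution: rescaling
  set σ₃ : Fin 4 → MvPolynomial (Fin 4) ℂ :=
    fun i => if i = 2 then C s * X 2 else if i = 3 then C (γ/α) * X 3 else X i with hσ₃_def
  set σ₃' : Fin 4 → MvPolynomial (Fin 4) ℂ :=
    fun i => if i = 2 then C s⁻¹ * X 2 else if i = 3 then C (α/γ) * X 3 else X i with hσ₃'_def
  have hv30 : σ₃ 0 = X 0 := by rw [hσ₃_def]; simp
  have hv31 : σ₃ 1 = X 1 := by rw [hσ₃_def]; simp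
  have hv32 : σ₃ 2 = C s * X 2 := by rw [hσ₃_def]; simp
  have hv33 : σ₃ 3 = C (γ/α) * X 3 := by rw [hσ₃_def]; simp
  have hv30' : σ₃' 0 = X 0 := by rw [hσ₃'_def]; simp
  have hv31' : σ₃' 1 = X 1 := by rw [hσ₃'_def]; simp
  have hv32' : σ₃' 2 = C s⁻¹ * X 2 := by rw [hσ₃'_def]; simp
  have hv33' : σ₃' 3 = C (α/γ) * X 3 := by rw [hσ₃'_def]; simp
  have hc3a : ∀ i, aeval σ₃ (σ₃' i) = X i := by
    intro i
    fin_cases i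
    · show aeval σ₃ (σ₃' 0) = X 0
      rw [hv30', aeval_X, hv30]
    · show aeval σ₃ (σ₃' 1) = X 1
      rw [hv31', aeval_X, hv31]
    · show aeval σ₃ (σ₃' 2) = X 2
      rw [hv32', map_mul, aeval_C, algebraMap_eq, aeval_X, hv32, ← mul_assoc, ← map_mul,
        inv_mul_cancel₀ hs0, map_one, one_mul]
    · show aeval σ₃ (σ₃' 3) = X 3
      rw [hv33', map_mul, aeval_C, algebraMap_eq, aeval_X, hv33, ← mul_assoc, ← map_mul]
      rw [show α / γ * (γ / α) = 1 from by field_simp, map_one, one_mul]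
  have hc3b : ∀ i, aeval σ₃' (σ₃ i) = X i := by
    intro i
    fin_cases i
    · show aeval σ₃' (σ₃ 0) = X 0
      rw [hv30, aeval_X, hv30']
    · show aeval σ₃' (σ₃ 1) = X 1
      rw [hv31, aeval_X, hv31']
    · show aeval σ₃' (σ₃ 2) = X 2
      rw [hv32, map_mul, aeval_C, algebraMap_eq, aeval_X, hv32', ← mul_assoc, ← map_mul,
        mul_inv_cancel₀ hs0, map_one, one_mul]
    · show aeval σ₃' (σ₃ 3) = X 3
      rw [hv33, map_mul, aeval_C, algebraMap_eq, aeval_X, hv33', ← mul_assoc, ← map_mul]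
      rw [show γ / α * (α / γ) = 1 from by field_simp, map_one, one_mul]
  have haeval3 : aeval σ₃ f₃ = C γ * (X 0 * X 3 + X 1 ^ (2*n-1) + X 2 ^ 2) := by
    rw [hf₃_def]
    simp only [map_add, map_mul, map_pow, aeval_C, aeval_X, algebraMap_eq,
      hv30, hv31, hv32, hv33]
    have e1 : (C α : MvPolynomial (Fin 4) ℂ) * C (γ/α) = C γ := by
      rw [← map_mul]
      congr 1
      field_simp
    have e2 : (C β : MvPolynomial (Fin 4) ℂ) * C s ^ 2 = C γ := by
      rw [← map_pow, ← map_mul, hs2]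
    linear_combination (X 0 * X 3) * e1 + (X 2 ^ 2) * e2
  -- homogeneity of the substitutions
  have hT_homog : T.IsWeightedHomogeneous w (2*(n:ℤ)-1) := by
    rw [hT_def]
    have := (isWeightedHomogeneous_C w t).mul
      ((aux_cast (isWeightedHomogeneous_X ℂ w 0) hw0).mul hP_homog)
    exact aux_cast this (by ring)
  have hσ₁h : ∀ i, (σ₁ i).IsWeightedHomogeneous w (w i) := by
    intro i
    fin_cases i
    · show (σ₁ 0).IsWeightedHomogeneous w (w 0)
      rw [hv10]; exact isWeightedHomogeneous_X ℂ w 0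
    · show (σ₁ 1).IsWeightedHomogeneous w (w 1)
      rw [hv11]; exact isWeightedHomogeneous_X ℂ w 1
    · show (σ₁ 2).IsWeightedHomogeneous w (w 2)
      rw [hv12]
      exact aux_sub (isWeightedHomogeneous_X ℂ w 2) (aux_cast hT_homog hw2.symm)
    · show (σ₁ 3).IsWeightedHomogeneous w (w 3)
      rw [hv13]; exact isWeightedHomogeneous_X ℂ w 3
  have hQ'_homog : Q'.IsWeightedHomogeneous w (4*(n:ℤ)-3) := by
    rw [hQ'_def]
    refine aux_sub hQ_homog ?_
    have := (isWeightedHomogeneous_C w u).mul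
      ((aux_cast (isWeightedHomogeneous_X ℂ w 0) hw0).mul (aux_pow hP_homog 2))
    exact aux_cast this (by push_cast; ring)
  have hσ₂h : ∀ i, (σ₂ i).IsWeightedHomogeneous w (w i) := by
    intro i
    fin_cases i
    · show (σ₂ 0).IsWeightedHomogeneous w (w 0)
      rw [hv20]; exact isWeightedHomogeneous_X ℂ w 0
    · show (σ₂ 1).IsWeightedHomogeneous w (w 1)
      rw [hv21]; exact isWeightedHomogeneous_X ℂ w 1
    · show (σ₂ 2).IsWeightedHomogeneous w (w 2)
      rw [hv22]; exact isWeightedHomogeneous_X ℂ w 2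
    · show (σ₂ 3).IsWeightedHomogeneous w (w 3)
      rw [hv23]
      refine aux_sub (isWeightedHomogeneous_X ℂ w 3) ?_
      have := (isWeightedHomogeneous_C w α⁻¹).mul hQ'_homog
      exact aux_cast this (by rw [hw3]; ring)
  have hσ₃h : ∀ i, (σ₃ i).IsWeightedHomogeneous w (w i) := by
    intro i
    fin_cases i
    · show (σ₃ 0).IsWeightedHomogeneous w (w 0)
      rw [hv30]; exact isWeightedHomogeneous_X ℂ w 0
    · show (σ₃ 1).IsWeightedHomogeneous w (w 1)
      rw [hv31]; exact isWeightedHomogeneous_X ℂ w 1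
    · show (σ₃ 2).IsWeightedHomogeneous w (w 2)
      rw [hv32]
      exact aux_cast ((isWeightedHomogeneous_C w s).mul (isWeightedHomogeneous_X ℂ w 2))
        (by ring)
    · show (σ₃ 3).IsWeightedHomogeneous w (w 3)
      rw [hv33]
      exact aux_cast ((isWeightedHomogeneous_C w (γ/α)).mul (isWeightedHomogeneous_X ℂ w 3))
        (by ring)
  -- assemble the automorphism
  set A₁ := mkEquiv σ₁ σ₁' hc1a hc1b with hA₁
  set A₂ := mkEquiv σ₂ σ₂' hc2a hc2b with hA₂
  set A₃ := mkEquiv σ₃ σ₃' hc3a hc3b with hA₃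
  refine ⟨(A₁.trans A₂).trans A₃, γ, h1, ?_, ?_⟩
  · intro k p hp
    show (A₃ (A₂ (A₁ p))).IsWeightedHomogeneous w k
    rw [hA₁, hA₂, hA₃, mkEquiv_apply, mkEquiv_apply, mkEquiv_apply]
    exact aux_aeval_homog σ₃ hσ₃h (aux_aeval_homog σ₂ hσ₂h (aux_aeval_homog σ₁ hσ₁h hp))
  · show A₃ (A₂ (A₁ f)) = γ • (X 0 * X 3 + X 1 ^ (2*n-1) + X 2 ^ 2)
    rw [hA₁, hA₂, hA₃, mkEquiv_apply, mkEquiv_apply, mkEquiv_apply,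
      haeval1, haeval2, haeval3, smul_eq_C_mul]


end
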